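/- If f : X → X is a recurrent continuous map on a metric space X (i.e., there exists a sequence n_k → ∞ with sup_{x∈X} d(f^{n_k}(x), x) → 0), then for every positive integer m, the map f^m is also recurrent. -/

import Mathlib

/-- A continuous map `f` on a metric space is *recurrent* if there is a sequence
`n k → ∞` with `sup_x d(f^[n k] x, x) → 0`, phrased via: for every `ε > 0`
eventually `d(f^[n k] x, x) < ε` for all `x`. -/
def IsRecurrentMap {X : Type*} [MetricSpace X] (f : X → X) : Prop :=
  ∃ n : ℕ → ℕ, Filter.Tendsto n Filter.atTop Filter.atTop ∧
    ∀ ε > (0 : ℝ), ∃ K : ℕ, ∀ k ≥ K, ∀ x : X, dist (f^[n k] x) x < ε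

theorem recurrent_iterate {X : Type*} [MetricSpace X] (f : X → X)
    (hf : Continuous f) (hrec : IsRecurrentMap f) (m : ℕ) (hm : 0 < m) :
    IsRecurrentMap (f^[m]) := by
  obtain ⟨n, hn, h⟩ := hrec
  refine ⟨n, hn, fun ε hε => ?_⟩
  have hε' : (0:ℝ) < ε / (2 * m) := by positivity
  obtain ⟨K, hK⟩ := h (ε / (2 * m)) hε'
  refine ⟨K, fun k hk x => ?_⟩
  have key : ∀ j y, dist (f^[j * n k] y) y ≤ j * (ε / (2 * m)) := by
    intro j
    induction j with
    | zero => simp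
    | succ j ih =>
      intro y
      push_cast
      have heq : f^[(j + 1) * n k] y = f^[j * n k] (f^[n k] y) := by
        rw [add_mul, one_mul, Function.iterate_add_apply]
      calc dist (f^[(j + 1) * n k] y) y
          ≤ dist (f^[j * n k] (f^[n k] y)) (f^[n k] y) + dist (f^[n k] y) y := by
            rw [heq]; exact dist_triangle _ _ _
        _ ≤ j * (ε / (2 * m)) + ε / (2 * m) :=
            add_le_add (ih _) (hK k hk y).le
        _ = (j + 1) * (ε / (2 * m)) := by ring
  have h1 : (f^[m])^[n k] x = f^[m * n k] x := by
    rw [Function.iterate_mul]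
  calc dist ((f^[m])^[n k] x) x = dist (f^[m * n k] x) x := by rw [h1]
    _ ≤ m * (ε / (2 * m)) := key m x
    _ = ε / 2 := by field_simp
    _ < ε := by linarith
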